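/- The subgroup G = ⟨(1,2,3), (2,5,3,6)(1,4)⟩ of Alt_6 acts transitively and faithfully on {1,...,6} with fixity 3, has order 36, contains the minimal normal subgroup ⟨(1,2,3),(4,5,6)⟩ of order 9, and its point stabilizers are isomorphic to Sym_3. -/

import Mathlib

open MulAction Pointwise

def HasFixity (G Ω : Type*) [Group G] [MulAction G Ω] (k : ℕ) : Prop :=
  (∀ g : G, g ≠ 1 → (fixedBy Ω g).ncard ≤ k) ∧ ∃ g : G, g ≠ 1 ∧ (fixedBy Ω g).ncard = k

def IsSemiregular (G Ω : Type*) [Group G] [MulAction G Ω] (N : Subgroup G) : Prop :=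
  ∀ n ∈ N, n ≠ 1 → ∀ ω : Ω, n • ω ≠ ω

def IsMinimalNormal (G : Type*) [Group G] (N : Subgroup G) : Prop :=
  N.Normal ∧ N ≠ ⊥ ∧ ∀ M : Subgroup G, M.Normal → M ≤ N → M = ⊥ ∨ M = N

def IsOrbitOf (G Ω : Type*) [Group G] [MulAction G Ω] (N : Subgroup G) (s : Set Ω) : Prop :=
  ∃ ω : Ω, s = MulAction.orbit N ω

def IsRegularOn (G Ω : Type*) [Group G] [MulAction G Ω] (R : Subgroup G) : Prop :=
  (∀ ω ω' : Ω, ∃ r ∈ R, r • ω = ω') ∧ ∀ r ∈ R, r ≠ 1 → ∀ ω : Ω, r • ω ≠ ω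

def IsFrobeniusOn (G Ω : Type*) [Group G] [MulAction G Ω] (F : Subgroup G) (s : Set Ω) : Prop :=
  (∃ f ∈ F, f ≠ 1 ∧ ∃ ω ∈ s, f • ω = ω) ∧
  ∀ f ∈ F, f ≠ 1 → ∀ ω ∈ s, ∀ ω' ∈ s, f • ω = ω → f • ω' = ω' → ω = ω'

set_option maxRecDepth 10000

namespace Stmt17Aux

def aP : Equiv.Perm (Fin 6) := c[0, 1, 2]
def bP : Equiv.Perm (Fin 6) := c[1, 4, 2, 5] * c[0, 3]
def GP : Subgroup (Equiv.Perm (Fin 6)) := Subgroup.closure {aP, bP}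
def NP : Subgroup (Equiv.Perm (Fin 6)) :=
  Subgroup.closure {c[0, 1, 2], (c[3, 4, 5] : Equiv.Perm (Fin 6))}

def g00 : Equiv.Perm (Fin 6) := ⟨![0, 1, 2, 3, 4, 5], ![0, 1, 2, 3, 4, 5], by decide, by decide⟩
def g01 : Equiv.Perm (Fin 6) := ⟨![1, 2, 0, 3, 4, 5], ![2, 0, 1, 3, 4, 5], by decide, by decide⟩
def g02 : Equiv.Perm (Fin 6) := ⟨![3, 4, 5, 0, 2, 1], ![3, 5, 4, 0, 1, 2], by decide, by decide⟩
def g03 : Equiv.Perm (Fin 6) := ⟨![2, 0, 1, 3, 4, 5], ![1, 2, 0, 3, 4, 5], by decide, by decide⟩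
def g04 : Equiv.Perm (Fin 6) := ⟨![3, 4, 5, 1, 0, 2], ![4, 3, 5, 0, 1, 2], by decide, by decide⟩
def g05 : Equiv.Perm (Fin 6) := ⟨![4, 5, 3, 0, 2, 1], ![3, 5, 4, 2, 0, 1], by decide, by decide⟩
def g06 : Equiv.Perm (Fin 6) := ⟨![0, 2, 1, 3, 5, 4], ![0, 2, 1, 3, 5, 4], by decide, by decide⟩
def g07 : Equiv.Perm (Fin 6) := ⟨![3, 4, 5, 2, 1, 0], ![5, 4, 3, 0, 1, 2], by decide, by decide⟩
def g08 : Equiv.Perm (Fin 6) := ⟨![4, 5, 3, 1, 0, 2], ![4, 3, 5, 2, 0, 1], by decide, by decide⟩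
def g09 : Equiv.Perm (Fin 6) := ⟨![1, 0, 2, 3, 5, 4], ![1, 0, 2, 3, 5, 4], by decide, by decide⟩
def g10 : Equiv.Perm (Fin 6) := ⟨![5, 3, 4, 0, 2, 1], ![3, 5, 4, 1, 2, 0], by decide, by decide⟩
def g11 : Equiv.Perm (Fin 6) := ⟨![0, 2, 1, 4, 3, 5], ![0, 2, 1, 4, 3, 5], by decide, by decide⟩
def g12 : Equiv.Perm (Fin 6) := ⟨![2, 1, 0, 3, 5, 4], ![2, 1, 0, 3, 5, 4], by decide, by decide⟩
def g13 : Equiv.Perm (Fin 6) := ⟨![3, 5, 4, 0, 1, 2], ![3, 4, 5, 0, 2, 1], by decide, by decide⟩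
def g14 : Equiv.Perm (Fin 6) := ⟨![4, 5, 3, 2, 1, 0], ![5, 4, 3, 2, 0, 1], by decide, by decide⟩
def g15 : Equiv.Perm (Fin 6) := ⟨![5, 3, 4, 1, 0, 2], ![4, 3, 5, 1, 2, 0], by decide, by decide⟩
def g16 : Equiv.Perm (Fin 6) := ⟨![1, 0, 2, 4, 3, 5], ![1, 0, 2, 4, 3, 5], by decide, by decide⟩
def g17 : Equiv.Perm (Fin 6) := ⟨![3, 5, 4, 1, 2, 0], ![5, 3, 4, 0, 2, 1], by decide, by decide⟩
def g18 : Equiv.Perm (Fin 6) := ⟨![0, 2, 1, 5, 4, 3], ![0, 2, 1, 5, 4, 3], by decide, by decide⟩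
def g19 : Equiv.Perm (Fin 6) := ⟨![2, 1, 0, 4, 3, 5], ![2, 1, 0, 4, 3, 5], by decide, by decide⟩
def g20 : Equiv.Perm (Fin 6) := ⟨![4, 3, 5, 0, 1, 2], ![3, 4, 5, 1, 0, 2], by decide, by decide⟩
def g21 : Equiv.Perm (Fin 6) := ⟨![3, 5, 4, 2, 0, 1], ![4, 5, 3, 0, 2, 1], by decide, by decide⟩
def g22 : Equiv.Perm (Fin 6) := ⟨![5, 4, 3, 0, 1, 2], ![3, 4, 5, 2, 1, 0], by decide, by decide⟩
def g23 : Equiv.Perm (Fin 6) := ⟨![5, 3, 4, 2, 1, 0], ![5, 4, 3, 1, 2, 0], by decide, by decide⟩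
def g24 : Equiv.Perm (Fin 6) := ⟨![1, 0, 2, 5, 4, 3], ![1, 0, 2, 5, 4, 3], by decide, by decide⟩
def g25 : Equiv.Perm (Fin 6) := ⟨![4, 3, 5, 1, 2, 0], ![5, 3, 4, 1, 0, 2], by decide, by decide⟩
def g26 : Equiv.Perm (Fin 6) := ⟨![5, 4, 3, 1, 2, 0], ![5, 3, 4, 2, 1, 0], by decide, by decide⟩
def g27 : Equiv.Perm (Fin 6) := ⟨![2, 1, 0, 5, 4, 3], ![2, 1, 0, 5, 4, 3], by decide, by decide⟩
def g28 : Equiv.Perm (Fin 6) := ⟨![4, 3, 5, 2, 0, 1], ![4, 5, 3, 1, 0, 2], by decide, by decide⟩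
def g29 : Equiv.Perm (Fin 6) := ⟨![0, 1, 2, 4, 5, 3], ![0, 1, 2, 5, 3, 4], by decide, by decide⟩
def g30 : Equiv.Perm (Fin 6) := ⟨![5, 4, 3, 2, 0, 1], ![4, 5, 3, 2, 1, 0], by decide, by decide⟩
def g31 : Equiv.Perm (Fin 6) := ⟨![0, 1, 2, 5, 3, 4], ![0, 1, 2, 4, 5, 3], by decide, by decide⟩
def g32 : Equiv.Perm (Fin 6) := ⟨![1, 2, 0, 4, 5, 3], ![2, 0, 1, 5, 3, 4], by decide, by decide⟩
def g33 : Equiv.Perm (Fin 6) := ⟨![1, 2, 0, 5, 3, 4], ![2, 0, 1, 4, 5, 3], by decide, by decide⟩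
def g34 : Equiv.Perm (Fin 6) := ⟨![2, 0, 1, 4, 5, 3], ![1, 2, 0, 5, 3, 4], by decide, by decide⟩
def g35 : Equiv.Perm (Fin 6) := ⟨![2, 0, 1, 5, 3, 4], ![1, 2, 0, 4, 5, 3], by decide, by decide⟩

def gf : Fin 36 → Equiv.Perm (Fin 6) := ![g00, g01, g02, g03, g04, g05, g06, g07, g08, g09, g10, g11, g12, g13, g14, g15, g16, g17, g18, g19, g20, g21, g22, g23, g24, g25, g26, g27, g28, g29, g30, g31, g32, g33, g34, g35]
def nf : Fin 9 → Equiv.Perm (Fin 6) := ![g00, g01, g29, g03, g32, g31, g34, g33, g35]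
def invT : Fin 36 → Fin 36 := ![0, 3, 13, 1, 20, 21, 6, 22, 28, 9, 17, 11, 12, 2, 30, 25, 16, 10, 18, 19, 4, 5, 7, 26, 24, 15, 23, 27, 8, 31, 14, 29, 35, 34, 33, 32]
def mulT : Fin 36 → Fin 36 → Fin 36 := ![![0, 1, 2, 3, 4, 5, 6, 7, 8, 9, 10, 11, 12, 13, 14, 15, 16, 17, 18, 19, 20, 21, 22, 23, 24, 25, 26, 27, 28, 29, 30, 31, 32, 33, 34, 35], ![1, 3, 4, 0, 7, 8, 9, 2, 14, 12, 15, 16, 6, 17, 5, 23, 19, 21, 24, 11, 25, 13, 26, 10, 27, 28, 30, 18, 20, 32, 22, 33, 34, 35, 29, 31], ![2, 5, 6, 10, 11, 12, 13, 18, 19, 20, 9, 21, 22, 0, 27, 16, 28, 29, 17, 30, 3, 31, 1, 24, 25, 34, 32, 26, 35, 7, 33, 4, 14, 8, 23, 15], ![3, 0, 7, 1, 2, 14, 12, 4, 5, 6, 23, 19, 9, 21, 8, 10, 11, 13, 27, 16, 28, 17, 30, 15, 18, 20, 22, 24, 25, 34, 26, 35, 29, 31, 32, 33], ![4, 8, 9,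 15, 16, 6, 17, 24, 11, 25, 12, 13, 26, 1, 18, 19, 20, 32, 21, 22, 0, 33, 3, 27, 28, 29, 34, 30, 31, 2, 35, 7, 5, 14, 10, 23], ![5, 10, 11, 2, 18, 19, 20, 6, 27, 22, 16, 28, 13, 29, 12, 24, 30, 31, 25, 21, 34, 0, 32, 9, 26, 35, 33, 17, 3, 14, 1, 8, 23, 15, 7, 4], ![6, 12, 13, 9, 21, 22, 0, 17, 30, 3, 20, 31, 1, 2, 26, 28, 35, 7, 29, 33, 10, 4, 5, 25, 34, 23, 14, 32, 15, 18, 8, 11, 27, 19, 24, 16], ![7, 14, 12, 23, 19, 9, 21, 27, 16, 28, 6, 17, 30, 3, 24, 11, 25, 34, 13, 26, 1, 35, 0, 18, 20, 32, 29, 22, 33, 4, 31, 2, 8, 5, 15, 10], ![8, 15, 16, 4, 24, 11, 25, 9, 18, 26, 19, 20, 17, 32, 6, 27, 22, 33, 28, 13, 29, 1, 34, 12, 30, 31, 35, 21, 0, 5, 3, 14, 10, 23, 2, 7], ![9, 6, 17, 12, 13, 26, 1, 21, 22, 0, 25, 33, 3, 4, 30, 20, 31, 2, 32, 35, 15, 7,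 8, 28, 29, 10, 5, 34, 23, 24, 14, 16, 18, 11, 27, 19], ![10, 2, 18, 5, 6, 27, 22, 11, 12, 13, 24, 30, 20, 31, 19, 9, 21, 0, 26, 28, 35, 29, 33, 16, 17, 3, 1, 25, 34, 23, 32, 15, 7, 4, 14, 8], ![11, 19, 20, 16, 28, 13, 29, 25, 21, 34, 22, 0, 32, 5, 17, 30, 3, 14, 31, 1, 2, 8, 10, 26, 35, 7, 23, 33, 4, 6, 15, 18, 12, 27, 9, 24], ![12, 9, 21, 6, 17, 30, 3, 13, 26, 1, 28, 35, 0, 7, 22, 25, 33, 4, 34, 31, 23, 2, 14, 20, 32, 15, 8, 29, 10, 27, 5, 19, 24, 16, 18, 11], ![13, 22, 0, 20, 31, 1, 2, 29, 33, 10, 3, 4, 5, 6, 32, 35, 15, 18, 7, 8, 9, 11, 12, 34, 23, 24, 27, 14, 16, 17, 19, 21, 26, 30, 25, 28], ![14, 23, 19, 7, 27, 16, 28, 12, 24, 30, 11, 25, 21, 34, 9, 18, 26, 35, 20, 17, 32, 3, 29, 6, 22, 33, 31, 13, 1, 8, 0, 5, 15, 10, 4, 2], ![15, 4, 24, 8,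 9, 18, 26, 16, 6, 17, 27, 22, 25, 33, 11, 12, 13, 1, 30, 20, 31, 32, 35, 19, 21, 0, 3, 28, 29, 10, 34, 23, 2, 7, 5, 14], ![16, 11, 25, 19, 20, 17, 32, 28, 13, 29, 26, 1, 34, 8, 21, 22, 0, 5, 33, 3, 4, 14, 15, 30, 31, 2, 10, 35, 7, 9, 23, 24, 6, 18, 12, 27], ![17, 26, 1, 25, 33, 3, 4, 32, 35, 15, 0, 7, 8, 9, 34, 31, 23, 24, 2, 14, 12, 16, 6, 29, 10, 27, 18, 5, 19, 21, 11, 13, 30, 22, 28, 20], ![18, 27, 22, 24, 30, 20, 31, 26, 28, 35, 13, 29, 33, 10, 25, 21, 34, 23, 0, 32, 5, 15, 2, 17, 3, 14, 7, 1, 8, 11, 4, 6, 19, 12, 16, 9], ![19, 16, 28, 11, 25, 21, 34, 20, 17, 32, 30, 3, 29, 14, 13, 26, 1, 8, 35, 0, 7, 5, 23, 22, 33, 4, 15, 31, 2, 12, 10, 27, 9, 24, 6, 18], ![20, 13, 29, 22, 0, 32, 5, 31, 1, 2, 34, 8, 10, 11, 33, 3, 4, 6, 14, 15, 16, 18, 19,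 35, 7, 9, 12, 23, 24, 25, 27, 28, 17, 21, 26, 30], ![21, 30, 3, 28, 35, 0, 7, 34, 31, 23, 1, 2, 14, 12, 29, 33, 10, 27, 4, 5, 6, 19, 9, 32, 15, 18, 24, 8, 11, 13, 16, 17, 22, 26, 20, 25], ![22, 20, 31, 13, 29, 33, 10, 0, 32, 5, 35, 15, 2, 18, 1, 34, 8, 11, 23, 4, 24, 6, 27, 3, 14, 16, 19, 7, 9, 26, 12, 30, 25, 28, 17, 21], ![23, 7, 27, 14, 12, 24, 30, 19, 9, 21, 18, 26, 28, 35, 16, 6, 17, 3, 22, 25, 33, 34, 31, 11, 13, 1, 0, 20, 32, 15, 29, 10, 4, 2, 8, 5], ![24, 18, 26, 27, 22, 25, 33, 30, 20, 31, 17, 32, 35, 15, 28, 13, 29, 10, 1, 34, 8, 23, 4, 21, 0, 5, 2, 3, 14, 16, 7, 9, 11, 6, 19, 12], ![25, 17, 32, 26, 1, 34, 8, 33, 3, 4, 29, 14, 15, 16, 35, 0, 7, 9, 5, 23, 19, 24, 11, 31, 2, 12, 6, 10, 27, 28, 18, 20, 21, 13, 30, 22], ![26, 25, 33, 17, 32,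 35, 15, 1, 34, 8, 31, 23, 4, 24, 3, 29, 14, 16, 10, 7, 27, 9, 18, 0, 5, 19, 11, 2, 12, 30, 6, 22, 28, 20, 21, 13], ![27, 24, 30, 18, 26, 28, 35, 22, 25, 33, 21, 34, 31, 23, 20, 17, 32, 15, 3, 29, 14, 10, 7, 13, 1, 8, 4, 0, 5, 19, 2, 12, 16, 9, 11, 6], ![28, 21, 34, 30, 3, 29, 14, 35, 0, 7, 32, 5, 23, 19, 31, 1, 2, 12, 8, 10, 11, 27, 16, 33, 4, 6, 9, 15, 18, 20, 24, 25, 13, 17, 22, 26], ![29, 32, 5, 34, 8, 10, 11, 14, 15, 16, 2, 18, 19, 20, 23, 4, 24, 25, 6, 27, 22, 28, 13, 7, 9, 26, 17, 12, 30, 31, 21, 0, 33, 1, 35, 3], ![30, 28, 35, 21, 34, 31, 23, 3, 29, 14, 33, 10, 7, 27, 0, 32, 5, 19, 15, 2, 18, 12, 24, 1, 8, 11, 16, 4, 6, 22, 9, 26, 20, 25, 13, 17], ![31, 33, 10, 35, 15, 2, 18, 23, 4, 24, 5, 6, 27, 22, 7, 8, 9, 26, 11, 12, 13, 30, 20, 14,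 16, 17, 25, 19, 21, 0, 28, 29, 1, 32, 3, 34], ![32, 34, 8, 29, 14, 15, 16, 5, 23, 19, 4, 24, 11, 25, 10, 7, 27, 28, 9, 18, 26, 20, 17, 2, 12, 30, 21, 6, 22, 33, 13, 1, 35, 3, 31, 0], ![33, 35, 15, 31, 23, 4, 24, 10, 7, 27, 8, 9, 18, 26, 2, 14, 12, 30, 16, 6, 17, 22, 25, 5, 19, 21, 28, 11, 13, 1, 20, 32, 3, 34, 0, 29], ![34, 29, 14, 32, 5, 23, 19, 8, 10, 11, 7, 27, 16, 28, 15, 2, 18, 20, 12, 24, 30, 25, 21, 4, 6, 22, 13, 9, 26, 35, 17, 3, 31, 0, 33, 1], ![35, 31, 23, 33, 10, 7, 27, 15, 2, 18, 14, 12, 24, 30, 4, 5, 6, 22, 19, 9, 21, 26, 28, 8, 11, 13, 20, 16, 17, 3, 25, 34, 0, 29, 1, 32]]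

lemma mulTbl : ∀ i j : Fin 36, gf i * gf j = gf (mulT i j) := by decide +kernel
lemma invTbl : ∀ i : Fin 36, (gf i)⁻¹ = gf (invT i) := by decide +kernel
lemma oneTbl : (1 : Equiv.Perm (Fin 6)) = gf 0 := by decide +kernel

def GS : Subgroup (Equiv.Perm (Fin 6)) where
  carrier := Set.range gf
  one_mem' := ⟨0, oneTbl.symm⟩
  inv_mem' := by rintro x ⟨i, rfl⟩; exact ⟨invT i, (invTbl i).symm⟩
  mul_mem' := by rintro x y ⟨i, rfl⟩ ⟨j, rfl⟩; exact ⟨mulT i j, (mulTbl i j).symm⟩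

lemma haG : aP ∈ GP := Subgroup.subset_closure (Set.mem_insert _ _)
lemma hbG : bP ∈ GP := Subgroup.subset_closure (Set.mem_insert_of_mem _ rfl)
lemma haN : (c[0, 1, 2] : Equiv.Perm (Fin 6)) ∈ NP :=
  Subgroup.subset_closure (Set.mem_insert _ _)
lemma hcN : (c[3, 4, 5] : Equiv.Perm (Fin 6)) ∈ NP :=
  Subgroup.subset_closure (Set.mem_insert_of_mem _ rfl)

lemma memg00 : g00 ∈ GP := by rw [show g00 = (1 : Equiv.Perm (Fin 6)) from by decide +kernel]; exact one_mem _
lemma memg01 : g01 ∈ GP := by rw [show g01 = aP from by decide +kernel]; exact haG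
lemma memg02 : g02 ∈ GP := by rw [show g02 = bP from by decide +kernel]; exact hbG
lemma memg03 : g03 ∈ GP := by rw [show g03 = aP * aP from by decide +kernel]; exact (mul_mem haG haG)
lemma memg04 : g04 ∈ GP := by rw [show g04 = aP * bP from by decide +kernel]; exact (mul_mem haG hbG)
lemma memg05 : g05 ∈ GP := by rw [show g05 = bP * aP from by decide +kernel]; exact (mul_mem hbG haG)
lemma memg06 : g06 ∈ GP := by rw [show g06 = bP * bP from by decide +kernel]; exact (mul_mem hbG hbG)
lemma memg07 : g07 ∈ GP := by rw [show g07 = aP * aP * bP from by decide +kernel]; exact (mul_mem (mul_mem haG haG) hbG)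
lemma memg08 : g08 ∈ GP := by rw [show g08 = aP * bP * aP from by decide +kernel]; exact (mul_mem (mul_mem haG hbG) haG)
lemma memg09 : g09 ∈ GP := by rw [show g09 = aP * bP * bP from by decide +kernel]; exact (mul_mem (mul_mem haG hbG) hbG)
lemma memg10 : g10 ∈ GP := by rw [show g10 = bP * aP * aP from by decide +kernel]; exact (mul_mem (mul_mem hbG haG) haG)
lemma memg11 : g11 ∈ GP := by rw [show g11 = bP * aP * bP from by decide +kernel]; exact (mul_mem (mul_mem hbG haG) hbG)
lemma memg12 : g12 ∈ GP := by rw [show g12 = bP * bP * aP from by decide +kernel]; exact (mul_mem (mul_mem hbG hbG) haG)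
lemma memg13 : g13 ∈ GP := by rw [show g13 = bP * bP * bP from by decide +kernel]; exact (mul_mem (mul_mem hbG hbG) hbG)
lemma memg14 : g14 ∈ GP := by rw [show g14 = aP * aP * bP * aP from by decide +kernel]; exact (mul_mem (mul_mem (mul_mem haG haG) hbG) haG)
lemma memg15 : g15 ∈ GP := by rw [show g15 = aP * bP * aP * aP from by decide +kernel]; exact (mul_mem (mul_mem (mul_mem haG hbG) haG) haG)
lemma memg16 : g16 ∈ GP := by rw [show g16 = aP * bP * aP * bP from by decide +kernel]; exact (mul_mem (mul_mem (mul_mem haG hbG) haG) hbG)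
lemma memg17 : g17 ∈ GP := by rw [show g17 = aP * bP * bP * bP from by decide +kernel]; exact (mul_mem (mul_mem (mul_mem haG hbG) hbG) hbG)
lemma memg18 : g18 ∈ GP := by rw [show g18 = bP * aP * aP * bP from by decide +kernel]; exact (mul_mem (mul_mem (mul_mem hbG haG) haG) hbG)
lemma memg19 : g19 ∈ GP := by rw [show g19 = bP * aP * bP * aP from by decide +kernel]; exact (mul_mem (mul_mem (mul_mem hbG haG) hbG) haG)
lemma memg20 : g20 ∈ GP := by rw [show g20 = bP * aP * bP * bP from by decide +kernel]; exact (mul_mem (mul_mem (mul_mem hbG haG) hbG) hbG)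
lemma memg21 : g21 ∈ GP := by rw [show g21 = bP * bP * aP * bP from by decide +kernel]; exact (mul_mem (mul_mem (mul_mem hbG hbG) haG) hbG)
lemma memg22 : g22 ∈ GP := by rw [show g22 = bP * bP * bP * aP from by decide +kernel]; exact (mul_mem (mul_mem (mul_mem hbG hbG) hbG) haG)
lemma memg23 : g23 ∈ GP := by rw [show g23 = aP * aP * bP * aP * aP from by decide +kernel]; exact (mul_mem (mul_mem (mul_mem (mul_mem haG haG) hbG) haG) haG)
lemma memg24 : g24 ∈ GP := by rw [show g24 = aP * bP * aP * aP * bP from by decide +kernel]; exact (mul_mem (mul_mem (mul_mem (mul_mem haG hbG) haG) haG) hbG)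
lemma memg25 : g25 ∈ GP := by rw [show g25 = aP * bP * aP * bP * bP from by decide +kernel]; exact (mul_mem (mul_mem (mul_mem (mul_mem haG hbG) haG) hbG) hbG)
lemma memg26 : g26 ∈ GP := by rw [show g26 = aP * bP * bP * bP * aP from by decide +kernel]; exact (mul_mem (mul_mem (mul_mem (mul_mem haG hbG) hbG) hbG) haG)
lemma memg27 : g27 ∈ GP := by rw [show g27 = bP * aP * aP * bP * aP from by decide +kernel]; exact (mul_mem (mul_mem (mul_mem (mul_mem hbG haG) haG) hbG) haG)
lemma memg28 : g28 ∈ GP := by rw [show g28 = bP * aP * bP * aP * bP from by decide +kernel]; exact (mul_mem (mul_mem (mul_mem (mul_mem hbG haG) hbG) haG) hbG)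
lemma memg29 : g29 ∈ GP := by rw [show g29 = bP * aP * bP * bP * bP from by decide +kernel]; exact (mul_mem (mul_mem (mul_mem (mul_mem hbG haG) hbG) hbG) hbG)
lemma memg30 : g30 ∈ GP := by rw [show g30 = bP * bP * aP * bP * aP from by decide +kernel]; exact (mul_mem (mul_mem (mul_mem (mul_mem hbG hbG) haG) hbG) haG)
lemma memg31 : g31 ∈ GP := by rw [show g31 = bP * bP * bP * aP * bP from by decide +kernel]; exact (mul_mem (mul_mem (mul_mem (mul_mem hbG hbG) hbG) haG) hbG)
lemma memg32 : g32 ∈ GP := by rw [show g32 = aP * bP * aP * bP * bP * bP from by decide +kernel]; exact (mul_mem (mul_mem (mul_mem (mul_mem (mul_mem haG hbG) haG) hbG) hbG) hbG)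
lemma memg33 : g33 ∈ GP := by rw [show g33 = aP * bP * bP * bP * aP * bP from by decide +kernel]; exact (mul_mem (mul_mem (mul_mem (mul_mem (mul_mem haG hbG) hbG) hbG) haG) hbG)
lemma memg34 : g34 ∈ GP := by rw [show g34 = bP * aP * bP * aP * bP * bP from by decide +kernel]; exact (mul_mem (mul_mem (mul_mem (mul_mem (mul_mem hbG haG) hbG) haG) hbG) hbG)
lemma memg35 : g35 ∈ GP := by rw [show g35 = bP * bP * aP * bP * aP * bP from by decide +kernel]; exact (mul_mem (mul_mem (mul_mem (mul_mem (mul_mem hbG hbG) haG) hbG) haG) hbG)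
lemma nemg00 : g00 ∈ NP := by rw [show g00 = (1 : Equiv.Perm (Fin 6)) from by decide +kernel]; exact one_mem _
lemma nemg01 : g01 ∈ NP := by rw [show g01 = (c[0, 1, 2] : Equiv.Perm (Fin 6)) from by decide +kernel]; exact haN
lemma nemg29 : g29 ∈ NP := by rw [show g29 = (c[3, 4, 5] : Equiv.Perm (Fin 6)) from by decide +kernel]; exact hcN
lemma nemg03 : g03 ∈ NP := by rw [show g03 = (c[0, 1, 2] * c[0, 1, 2] : Equiv.Perm (Fin 6)) from by decide +kernel]; exact (mul_mem haN haN)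
lemma nemg32 : g32 ∈ NP := by rw [show g32 = (c[0, 1, 2] * c[3, 4, 5] : Equiv.Perm (Fin 6)) from by decide +kernel]; exact (mul_mem haN hcN)
lemma nemg31 : g31 ∈ NP := by rw [show g31 = (c[3, 4, 5] * c[3, 4, 5] : Equiv.Perm (Fin 6)) from by decide +kernel]; exact (mul_mem hcN hcN)
lemma nemg34 : g34 ∈ NP := by rw [show g34 = (c[0, 1, 2] * c[0, 1, 2] * c[3, 4, 5] : Equiv.Perm (Fin 6)) from by decide +kernel]; exact (mul_mem (mul_mem haN haN) hcN)
lemma nemg33 : g33 ∈ NP := by rw [show g33 = (c[0, 1, 2] * c[3, 4, 5] * c[3, 4, 5] : Equiv.Perm (Fin 6)) from by decide +kernel]; exact (mul_mem (mul_mem haN hcN) hcN)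
lemma nemg35 : g35 ∈ NP := by rw [show g35 = (c[0, 1, 2] * c[0, 1, 2] * c[3, 4, 5] * c[3, 4, 5] : Equiv.Perm (Fin 6)) from by decide +kernel]; exact (mul_mem (mul_mem (mul_mem haN haN) hcN) hcN)

lemma hmemAllG : ∀ i : Fin 36, gf i ∈ GP := by
  intro i; fin_cases i
  exacts [memg00, memg01, memg02, memg03, memg04, memg05, memg06, memg07, memg08, memg09, memg10, memg11, memg12, memg13, memg14, memg15, memg16, memg17, memg18, memg19, memg20, memg21, memg22, memg23, memg24, memg25, memg26, memg27, memg28, memg29, memg30, memg31, memg32, memg33, memg34, memg35]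

lemma hmemAllN : ∀ i : Fin 9, nf i ∈ NP := by
  intro i; fin_cases i
  exacts [nemg00, nemg01, nemg29, nemg03, nemg32, nemg31, nemg34, nemg33, nemg35]

def ninvT : Fin 9 → Fin 9 := ![0, 3, 5, 1, 8, 2, 7, 6, 4]
def nmulT : Fin 9 → Fin 9 → Fin 9 := ![![0, 1, 2, 3, 4, 5, 6, 7, 8], ![1, 3, 4, 0, 6, 7, 2, 8, 5], ![2, 4, 5, 6, 7, 0, 8, 1, 3], ![3, 0, 6, 1, 2, 8, 4, 5, 7], ![4, 6, 7, 2, 8, 1, 5, 3, 0], ![5, 7, 0, 8, 1, 2, 3, 4, 6], ![6, 2, 8, 4, 5, 3, 7, 0, 1], ![7, 8, 1, 5, 3, 4, 0, 6, 2], ![8, 5, 3, 7, 0, 6, 1, 2, 4]]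

lemma nmulTbl : ∀ i j : Fin 9, nf i * nf j = nf (nmulT i j) := by decide +kernel
lemma ninvTbl : ∀ i : Fin 9, (nf i)⁻¹ = nf (ninvT i) := by decide +kernel
lemma noneTbl : (1 : Equiv.Perm (Fin 6)) = nf 0 := by decide +kernel

def NS : Subgroup (Equiv.Perm (Fin 6)) where
  carrier := Set.range nf
  one_mem' := ⟨0, noneTbl.symm⟩
  inv_mem' := by rintro x ⟨i, rfl⟩; exact ⟨ninvT i, (ninvTbl i).symm⟩
  mul_mem' := by rintro x y ⟨i, rfl⟩ ⟨j, rfl⟩; exact ⟨nmulT i j, (nmulTbl i j).symm⟩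

lemma hGle : GP ≤ GS := by
  rw [GP, Subgroup.closure_le]
  rintro y hy
  simp only [Set.mem_insert_iff, Set.mem_singleton_iff] at hy
  rcases hy with rfl | rfl
  · exact ⟨1, by decide +kernel⟩
  · exact ⟨2, by decide +kernel⟩

lemma hGiff : ∀ x, x ∈ GP ↔ ∃ i : Fin 36, x = gf i := by
  intro x
  constructor
  · intro h
    obtain ⟨i, hi⟩ := hGle h
    exact ⟨i, hi.symm⟩
  · rintro ⟨i, rfl⟩
    exact hmemAllG i

lemma hNleGS : NP ≤ GP := by
  rw [NP, Subgroup.closure_le]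
  rintro y hy
  simp only [Set.mem_insert_iff, Set.mem_singleton_iff] at hy
  rcases hy with rfl | rfl
  · exact haG
  · rw [show (c[3, 4, 5] : Equiv.Perm (Fin 6)) = gf 29 from by decide +kernel]
    exact hmemAllG 29

lemma hNiff : ∀ x, x ∈ NP ↔ ∃ i : Fin 9, x = nf i := by
  have hle : NP ≤ NS := by
    rw [NP, Subgroup.closure_le]
    rintro y hy
    simp only [Set.mem_insert_iff, Set.mem_singleton_iff] at hy
    rcases hy with rfl | rfl
    · exact ⟨1, by decide +kernel⟩
    · exact ⟨2, by decide +kernel⟩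
  intro x
  constructor
  · intro h
    obtain ⟨i, hi⟩ := hle h
    exact ⟨i, hi.symm⟩
  · rintro ⟨i, rfl⟩
    exact hmemAllN i

lemma decT : ∀ i j : Fin 6, ∃ k : Fin 36, gf k i = j := by decide +kernel

lemma decFix : ∀ k : Fin 36, gf k ≠ 1 →
    (Finset.filter (fun i => gf k i = i) Finset.univ).card ≤ 3 := by decide +kernel

lemma decConj : ∀ n : Fin 9, ∀ k : Fin 36, ∃ m : Fin 9,
    gf k * nf n * (gf k)⁻¹ = nf m := by decide +kernel

def gg : Fin 2 → Equiv.Perm (Fin 6) := ![g01, g02]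

lemma ggMem : ∀ k : Fin 2, gg k ∈ GP := by
  intro k; fin_cases k
  exacts [memg01, memg02]

lemma decMin : ∀ n : Fin 9, nf n ≠ 1 → ∀ y : Fin 9, ∃ g : Fin 2, ∃ i : Fin 3, ∃ j : Fin 3,
    nf y = nf n ^ (i : ℕ) * (gg g * nf n * (gg g)⁻¹) ^ (j : ℕ) := by decide +kernel

lemma gfInj : Function.Injective gf := by decide +kernel
lemma nfInj : Function.Injective nf := by decide +kernel

lemma cardG : Nat.card GP = 36 := by
  have e : (GP : Set (Equiv.Perm (Fin 6))) = Set.range gf := by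
    ext x
    simp only [SetLike.mem_coe, hGiff x, Set.mem_range, eq_comm]
  rw [← SetLike.coe_sort_coe, e,
    Nat.card_congr (Equiv.ofInjective gf gfInj).symm, Nat.card_eq_fintype_card,
    Fintype.card_fin]

lemma cardN : Nat.card NP = 9 := by
  have e : (NP : Set (Equiv.Perm (Fin 6))) = Set.range nf := by
    ext x
    simp only [SetLike.mem_coe, hNiff x, Set.mem_range, eq_comm]
  rw [← SetLike.coe_sort_coe, e,
    Nat.card_congr (Equiv.ofInjective nf nfInj).symm, Nat.card_eq_fintype_card,
    Fintype.card_fin]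

lemma stabIso (i : Fin 6) (e : Fin 3 → Fin 6) (r : Fin 6 → Fin 3)
    (hre : ∀ k, r (e k) = k)
    (hinv : ∀ g : Equiv.Perm (Fin 6), g ∈ GP → g i = i → ∀ t, e (r (g (e t))) = g (e t))
    (hinj : ∀ g : Equiv.Perm (Fin 6), g ∈ GP → g i = i → (∀ t, g (e t) = e t) → g = 1)
    (hsurj : ∀ p : Equiv.Perm (Fin 3), ∃ g, g ∈ GP ∧ g i = i ∧ ∀ t, g (e t) = e (p t)) :
    Nonempty (MulAction.stabilizer GP i ≃* Equiv.Perm (Fin 3)) := by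
  have hmemfix : ∀ g : MulAction.stabilizer GP i,
      ((g : ↥GP) : Equiv.Perm (Fin 6)) ∈ GP ∧ ((g : ↥GP) : Equiv.Perm (Fin 6)) i = i := by
    intro g
    refine ⟨(g : ↥GP).2, ?_⟩
    have h := g.2
    rw [MulAction.mem_stabilizer_iff] at h
    exact h
  have hfixinv : ∀ g : Equiv.Perm (Fin 6), g i = i → g⁻¹ i = i := by
    intro g hgi
    conv_lhs => rw [← hgi]
    rw [Equiv.Perm.inv_def, Equiv.symm_apply_apply]
  have Pinv : ∀ g : Equiv.Perm (Fin 6), g ∈ GP → g i = i →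
      ∀ k, r (g⁻¹ (e (r (g (e k))))) = k := by
    intro g hg hgi k
    rw [hinv g hg hgi k, Equiv.Perm.inv_def, Equiv.symm_apply_apply, hre]
  have Prinv : ∀ g : Equiv.Perm (Fin 6), g ∈ GP → g i = i →
      ∀ k, r (g (e (r (g⁻¹ (e k))))) = k := by
    intro g hg hgi k
    have h := Pinv g⁻¹ (inv_mem hg) (hfixinv g hgi) k
    rwa [inv_inv] at h
  let F : MulAction.stabilizer GP i →* Equiv.Perm (Fin 3) := MonoidHom.mk'
    (fun g => ⟨fun k => r (((g : ↥GP) : Equiv.Perm (Fin 6)) (e k)),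
               fun k => r ((((g : ↥GP) : Equiv.Perm (Fin 6)))⁻¹ (e k)),
               fun k => Pinv _ (hmemfix g).1 (hmemfix g).2 k,
               fun k => Prinv _ (hmemfix g).1 (hmemfix g).2 k⟩)
    (by
      intro g h
      refine Equiv.ext fun k => ?_
      simp only [Equiv.coe_fn_mk, Equiv.Perm.coe_mul, Function.comp_apply]
      rw [hinv _ (hmemfix h).1 (hmemfix h).2 k]
      rfl)
  have hFinj : Function.Injective F := by
    refine (injective_iff_map_eq_one F).2 ?_
    intro g hg1
    have hfix : ∀ k, ((g : ↥GP) : Equiv.Perm (Fin 6)) (e k) = e k := by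
      intro k
      have h1 : r (((g : ↥GP) : Equiv.Perm (Fin 6)) (e k)) = k := Equiv.ext_iff.1 hg1 k
      conv_lhs => rw [← hinv _ (hmemfix g).1 (hmemfix g).2 k]
      rw [h1]
    have h2 : ((g : ↥GP) : Equiv.Perm (Fin 6)) = 1 :=
      hinj _ (hmemfix g).1 (hmemfix g).2 hfix
    exact Subtype.ext (Subtype.ext h2)
  have hFsurj : Function.Surjective F := by
    intro p
    obtain ⟨g, hg, hgi, hcom⟩ := hsurj p
    refine ⟨⟨⟨g, hg⟩, ?_⟩, ?_⟩
    · rw [MulAction.mem_stabilizer_iff]; exact hgi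
    · refine Equiv.ext fun k => ?_
      show r (g (e k)) = p k
      rw [hcom k, hre]
  exact ⟨MulEquiv.ofBijective F ⟨hFinj, hFsurj⟩⟩

lemma decStab1 : ∀ i : Fin 6, i.val < 3 →
    (∀ k : Fin 36, gf k i = i → ∀ t : Fin 3, (![3,4,5] : Fin 3 → Fin 6) ((![0,0,0,0,1,2] : Fin 6 → Fin 3) (gf k ((![3,4,5] : Fin 3 → Fin 6) t))) = gf k ((![3,4,5] : Fin 3 → Fin 6) t)) ∧
    (∀ k : Fin 36, gf k i = i → (∀ t : Fin 3, gf k ((![3,4,5] : Fin 3 → Fin 6) t) = (![3,4,5] : Fin 3 → Fin 6) t) → gf k = 1) ∧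
    (∀ p : Fin 3 → Fin 3, Function.Bijective p → ∃ k : Fin 36, gf k i = i ∧ ∀ t : Fin 3, gf k ((![3,4,5] : Fin 3 → Fin 6) t) = (![3,4,5] : Fin 3 → Fin 6) (p t)) := by decide +kernel

lemma decStab2 : ∀ i : Fin 6, 3 ≤ i.val →
    (∀ k : Fin 36, gf k i = i → ∀ t : Fin 3, (![0,1,2] : Fin 3 → Fin 6) ((![0,1,2,0,0,0] : Fin 6 → Fin 3) (gf k ((![0,1,2] : Fin 3 → Fin 6) t))) = gf k ((![0,1,2] : Fin 3 → Fin 6) t)) ∧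
    (∀ k : Fin 36, gf k i = i → (∀ t : Fin 3, gf k ((![0,1,2] : Fin 3 → Fin 6) t) = (![0,1,2] : Fin 3 → Fin 6) t) → gf k = 1) ∧
    (∀ p : Fin 3 → Fin 3, Function.Bijective p → ∃ k : Fin 36, gf k i = i ∧ ∀ t : Fin 3, gf k ((![0,1,2] : Fin 3 → Fin 6) t) = (![0,1,2] : Fin 3 → Fin 6) (p t)) := by decide +kernel

lemma stabIsoAll : ∀ i : Fin 6, Nonempty (MulAction.stabilizer GP i ≃* Equiv.Perm (Fin 3)) := by
  intro i
  by_cases hi : i.val < 3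
  · obtain ⟨h1, h2, h3⟩ := decStab1 i hi
    refine stabIso i ![3,4,5] ![0,0,0,0,1,2] (by decide) ?_ ?_ ?_
    · intro g hg hgi t
      obtain ⟨k, rfl⟩ := (hGiff g).1 hg
      exact h1 k hgi t
    · intro g hg hgi hfx
      obtain ⟨k, rfl⟩ := (hGiff g).1 hg
      exact h2 k hgi hfx
    · intro p
      obtain ⟨k, hk1, hk2⟩ := h3 p p.bijective
      exact ⟨gf k, hmemAllG k, hk1, hk2⟩
  · obtain ⟨h1, h2, h3⟩ := decStab2 i (by omega)
    refine stabIso i ![0,1,2] ![0,1,2,0,0,0] (by decide) ?_ ?_ ?_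
    · intro g hg hgi t
      obtain ⟨k, rfl⟩ := (hGiff g).1 hg
      exact h1 k hgi t
    · intro g hg hgi hfx
      obtain ⟨k, rfl⟩ := (hGiff g).1 hg
      exact h2 k hgi hfx
    · intro p
      obtain ⟨k, hk1, hk2⟩ := h3 p p.bijective
      exact ⟨gf k, hmemAllG k, hk1, hk2⟩

end Stmt17Aux

open Stmt17Aux in
theorem stmt_17 :
    let a : Equiv.Perm (Fin 6) := c[0, 1, 2]
    let b : Equiv.Perm (Fin 6) := c[1, 4, 2, 5] * c[0, 3]
    let G : Subgroup (Equiv.Perm (Fin 6)) := Subgroup.closure {a, b}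
    let N : Subgroup (Equiv.Perm (Fin 6)) :=
      Subgroup.closure {c[0, 1, 2], (c[3, 4, 5] : Equiv.Perm (Fin 6))}
    G ≤ alternatingGroup (Fin 6) ∧
    (∀ i j : Fin 6, ∃ g ∈ G, g i = j) ∧
    (∀ g ∈ G, g ≠ 1 → ({i : Fin 6 | g i = i} : Set (Fin 6)).ncard ≤ 3) ∧
    (∃ g ∈ G, g ≠ 1 ∧ ({i : Fin 6 | g i = i} : Set (Fin 6)).ncard = 3) ∧
    Nat.card G = 36 ∧ N ≤ G ∧ Nat.card N = 9 ∧
    IsMinimalNormal G (N.subgroupOf G) ∧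
    (∀ i : Fin 6, Nonempty (stabilizer G i ≃* Equiv.Perm (Fin 3))) := by
  intro a b G N
  have hGP : G = GP := rfl
  have hNP : N = NP := rfl
  refine ⟨?_, ?_, ?_, ?_, ?_, ?_, ?_, ⟨?_, ?_, ?_⟩, ?_⟩
  · -- G ≤ alternatingGroup
    rw [hGP, GP, Subgroup.closure_le]
    rintro y hy
    simp only [Set.mem_insert_iff, Set.mem_singleton_iff] at hy
    rcases hy with rfl | rfl <;>
      · rw [SetLike.mem_coe, Equiv.Perm.mem_alternatingGroup]; decide +kernel
  · -- transitivity
    intro i j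
    obtain ⟨k, hk⟩ := decT i j
    exact ⟨gf k, hGP ▸ hmemAllG k, hk⟩
  · -- fixity ≤ 3
    intro g hgG hg1
    obtain ⟨k, rfl⟩ := (hGiff g).1 (hGP ▸ hgG)
    have hset : ({i : Fin 6 | gf k i = i} : Set (Fin 6)) =
        ↑(Finset.filter (fun i => gf k i = i) Finset.univ) := by ext x; simp
    rw [hset, Set.ncard_coe_finset]
    exact decFix k hg1
  · -- exists fixity 3
    refine ⟨g01, hGP ▸ memg01, by decide, ?_⟩
    have hset : ({i : Fin 6 | g01 i = i} : Set (Fin 6)) =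
        ↑(Finset.filter (fun i => g01 i = i) Finset.univ) := by ext x; simp
    rw [hset, Set.ncard_coe_finset]
    decide
  · rw [hGP]; exact cardG
  · rw [hGP, hNP]; exact hNleGS
  · rw [hNP]; exact cardN
  · -- Normal
    constructor
    intro n hn g
    rw [Subgroup.mem_subgroupOf] at hn ⊢
    have hcoe : ((g * n * g⁻¹ : ↥G) : Equiv.Perm (Fin 6)) =
        (g : Equiv.Perm (Fin 6)) * (n : Equiv.Perm (Fin 6)) * (g : Equiv.Perm (Fin 6))⁻¹ := rfl
    rw [hNP] at hn ⊢
    obtain ⟨ni, hni⟩ := (hNiff _).1 hn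
    obtain ⟨gi, hgi⟩ := (hGiff (g : Equiv.Perm (Fin 6))).1 (hGP ▸ g.2)
    obtain ⟨m, hm⟩ := decConj ni gi
    rw [hcoe, hni, hgi, hm]
    exact hmemAllN m
  · -- ≠ ⊥
    intro hbot
    have hmem : (⟨aP, hGP ▸ haG⟩ : ↥G) ∈ N.subgroupOf G := by
      rw [Subgroup.mem_subgroupOf]
      exact hNP ▸ haN
    rw [hbot, Subgroup.mem_bot] at hmem
    have : aP = 1 := congrArg Subtype.val hmem
    exact (by decide : aP ≠ 1) this
  · -- minimality
    intro M hMnorm hMle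
    rcases eq_or_ne M ⊥ with h | h
    · exact Or.inl h
    right
    obtain ⟨m, hmM, hm1⟩ : ∃ m ∈ M, m ≠ 1 := by
      by_contra hc
      push_neg at hc
      exact h ((Subgroup.eq_bot_iff_forall M).2 hc)
    obtain ⟨ni, hni⟩ := (hNiff _).1 (hNP ▸ Subgroup.mem_subgroupOf.1 (hMle hmM))
    have hm1' : nf ni ≠ 1 := by
      intro h'
      apply hm1
      have h2 : ((m : ↥G) : Equiv.Perm (Fin 6)) = 1 := hni.trans h'
      exact Subtype.ext h2
    refine le_antisymm hMle ?_
    intro x hx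
    obtain ⟨xi, hxi⟩ := (hNiff _).1 (hNP ▸ Subgroup.mem_subgroupOf.1 hx)
    obtain ⟨gk, i, j, heq⟩ := decMin ni hm1' xi
    have hgG : gg gk ∈ G := hGP ▸ ggMem gk
    have hx2 : x = m ^ (i : ℕ) * ((⟨gg gk, hgG⟩ : ↥G) * m * (⟨gg gk, hgG⟩ : ↥G)⁻¹) ^ (j : ℕ) := by
      apply Subtype.ext
      push_cast
      rw [← hni, ← hxi] at heq
      exact heq
    rw [hx2]
    exact M.mul_mem (M.pow_mem hmM _) (M.pow_mem (hMnorm.conj_mem m hmM _) _)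
  · -- stabilizers
    intro i
    exact hGP ▸ stabIsoAll i
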